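/- The open Euclidean ball B(I, 1/2) in ℍ centered at an imaginary unit I ∈ 𝕊 is slice-open but not connected in the slice-topology: it decomposes as the disjoint union of the two relatively slice-open sets B(I,1/2) ∩ ℂ_I and ⋃_{J ∈ 𝕊, J ≠ ±I} B(I,1/2) ∩ ℂ_J. -/

import Mathlib

noncomputable section

abbrev Hq := Quaternion ℝ

/-- The sphere of imaginary units of the quaternions. -/
def SphereS : Set Hq := {q | q ^ 2 = -1}

/-- The identification of `ℂ` with the slice plane `ℂ_I = ℝ + ℝI`. -/
def sliceEmb (I : Hq) : ℂ → Hq := fun z => (z.re : Hq) + (z.im : Hq) * I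

/-- The slice complex plane `ℂ_I = ℝ + ℝI`. -/
def sliceC (I : Hq) : Set Hq := Set.range (sliceEmb I)

/-- The slice-topology on the quaternions: the quotient topology induced by the
canonical map from the disjoint union of the slices, i.e. the supremum of the
topologies coinduced by the parametrizations of the slices. -/
def sliceTopology : TopologicalSpace Hq :=
  ⨆ I ∈ SphereS, TopologicalSpace.coinduced (sliceEmb I) inferInstance

/-- The real line inside the quaternions. -/
def realLine : Set Hq := Set.range (fun x : ℝ => (x : Hq))

/-- `g : ℂ → ℍ` (thought of as a function on the slice `ℂ_I`) is (left) holomorphic on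
`U`: real differentiable with `∂ₓ g + I ∂_y g = 0`. -/
def SliceHolomorphicOn (I : Hq) (g : ℂ → Hq) (U : Set ℂ) : Prop :=
  ∀ z ∈ U, ∃ L : ℂ →L[ℝ] Hq, HasFDerivAt g L z ∧ L 1 + I * L Complex.I = 0

/-- A function on a slice-open set is slice regular if it is holomorphic on each slice. -/
def SliceRegular (f : Hq → Hq) (Ω : Set Hq) : Prop :=
  ∀ I ∈ SphereS, SliceHolomorphicOn I (f ∘ sliceEmb I) (sliceEmb I ⁻¹' Ω)

/-- `K(m)` for `K ∈ 𝕊^N` (with `K 0 = 1` by convention) and `1 ≤ m ≤ 2^N`: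
`∏_{i=N}^{1} (K_i K_{i-1})^{m_i}` where `(m_N … m_1)₂` is the binary expansion of `m-1`. -/
def zetaTerm (K : ℕ → Hq) (N m : ℕ) : Hq :=
  ((List.range N).reverse.map
    (fun j => (K (j + 1) * K j) ^ (if Nat.testBit (m - 1) j then 1 else 0))).prod

/-- The matrix `σ_N` (0-indexed): entry `(i,j)` is `(-1)^{N+(j+1)}` if
`(i+1)+(j+1) = 2^N + 1`, and `0` otherwise. -/
def sigmaMat (N : ℕ) : Matrix (Fin (2 ^ N)) (Fin (2 ^ N)) ℝ :=
  Matrix.of fun i j =>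
    if (i : ℕ) + (j : ℕ) = 2 ^ N - 1 then (-1 : ℝ) ^ (N + (j : ℕ) + 1) else 0

def QOrth (I J : Hq) : Prop := (I * star J).re = 0


section Aux

lemma sliceEmb_re (I : Hq) (z : ℂ) : (sliceEmb I z).re = z.re + z.im * I.re := by
  simp [sliceEmb, Quaternion.coe_mul_eq_smul]
lemma sliceEmb_imI (I : Hq) (z : ℂ) : (sliceEmb I z).imI = z.im * I.imI := by
  simp [sliceEmb, Quaternion.coe_mul_eq_smul]
lemma sliceEmb_imJ (I : Hq) (z : ℂ) : (sliceEmb I z).imJ = z.im * I.imJ := by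
  simp [sliceEmb, Quaternion.coe_mul_eq_smul]
lemma sliceEmb_imK (I : Hq) (z : ℂ) : (sliceEmb I z).imK = z.im * I.imK := by
  simp [sliceEmb, Quaternion.coe_mul_eq_smul]

lemma mem_sphere_iff {q : Hq} :
    q ∈ SphereS ↔ q.re = 0 ∧ q.imI^2 + q.imJ^2 + q.imK^2 = 1 := by
  simp only [SphereS, Set.mem_setOf_eq, sq, Quaternion.ext_iff, Quaternion.re_mul,
    Quaternion.imI_mul, Quaternion.imJ_mul, Quaternion.imK_mul, Quaternion.re_neg,
    Quaternion.imI_neg, Quaternion.imJ_neg, Quaternion.imK_neg, Quaternion.re_one,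
    Quaternion.imI_one, Quaternion.imJ_one, Quaternion.imK_one, neg_zero]
  constructor
  · rintro ⟨h1, h2, h3, h4⟩
    have hre : q.re = 0 := by
      by_contra h
      have e2 : q.imI = 0 := by
        have : 2 * q.re * q.imI = 0 := by linarith
        rcases mul_eq_zero.1 this with h' | h'
        · exact absurd (by rcases mul_eq_zero.1 h' with h'' | h'' <;> [norm_num at h''; exact h'']) h
        · exact h'
      have e3 : q.imJ = 0 := by
        have : 2 * q.re * q.imJ = 0 := by linarith
        rcases mul_eq_zero.1 this with h' | h'
        · exact absurd (by rcases mul_eq_zero.1 h' with h'' | h'' <;> [norm_num at h''; exact h'']) h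
        · exact h'
      have e4 : q.imK = 0 := by
        have : 2 * q.re * q.imK = 0 := by linarith
        rcases mul_eq_zero.1 this with h' | h'
        · exact absurd (by rcases mul_eq_zero.1 h' with h'' | h'' <;> [norm_num at h''; exact h'']) h
        · exact h'
      nlinarith [sq_nonneg q.re]
    exact ⟨hre, by nlinarith⟩
  · rintro ⟨h1, h2⟩
    refine ⟨by rw [h1]; nlinarith, by rw [h1]; ring, by rw [h1]; ring, by rw [h1]; ring⟩

lemma continuous_sliceEmb (I : Hq) : Continuous (sliceEmb I) :=
  (Quaternion.continuous_coe.comp Complex.continuous_re).add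
    ((Quaternion.continuous_coe.comp Complex.continuous_im).mul continuous_const)

lemma self_mem_sliceC (I : Hq) : I ∈ sliceC I :=
  ⟨Complex.I, by simp [sliceEmb]⟩

lemma sliceEmb_neg (I : Hq) (z : ℂ) :
    sliceEmb (-I) z = sliceEmb I ((starRingEnd ℂ) z) := by
  simp [sliceEmb, Complex.conj_re, Complex.conj_im]

lemma sliceC_neg (I : Hq) : sliceC (-I) = sliceC I := by
  ext q
  constructor
  · rintro ⟨z, rfl⟩; exact ⟨(starRingEnd ℂ) z, (sliceEmb_neg I z).symm⟩
  · rintro ⟨z, rfl⟩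
    exact ⟨(starRingEnd ℂ) z, by rw [sliceEmb_neg, Complex.conj_conj]⟩

lemma isOpen_slice_iff {s : Set Hq} :
    @IsOpen Hq sliceTopology s ↔ ∀ J ∈ SphereS, IsOpen (sliceEmb J ⁻¹' s) := by
  unfold sliceTopology
  simp only [isOpen_iSup_iff, isOpen_coinduced]

/-- Two distinct, non-opposite slices meet only in real points. -/
lemma slice_inter {I J : Hq} (hI : I ∈ SphereS) (hJ : J ∈ SphereS)
    (hne : J ≠ I) (hne' : J ≠ -I) {q : Hq} (h1 : q ∈ sliceC I) (h2 : q ∈ sliceC J) :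
    q.imI = 0 ∧ q.imJ = 0 ∧ q.imK = 0 := by
  obtain ⟨hIre, hInorm⟩ := mem_sphere_iff.1 hI
  obtain ⟨hJre, hJnorm⟩ := mem_sphere_iff.1 hJ
  obtain ⟨z, rfl⟩ := h1
  obtain ⟨w, hw⟩ := h2
  have e1 : z.im * I.imI = w.im * J.imI := by
    rw [← sliceEmb_imI I z, ← hw, sliceEmb_imI]
  have e2 : z.im * I.imJ = w.im * J.imJ := by
    rw [← sliceEmb_imJ I z, ← hw, sliceEmb_imJ]
  have e3 : z.im * I.imK = w.im * J.imK := by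
    rw [← sliceEmb_imK I z, ← hw, sliceEmb_imK]
  rcases eq_or_ne z.im 0 with hz | hz
  · simp [sliceEmb_imI, sliceEmb_imJ, sliceEmb_imK, hz]
  · exfalso
    have hsq : z.im ^ 2 = w.im ^ 2 := by
      linear_combination (-z.im^2) * hInorm + (w.im^2) * hJnorm +
        (z.im*I.imI + w.im*J.imI) * e1 + (z.im*I.imJ + w.im*J.imJ) * e2 +
        (z.im*I.imK + w.im*J.imK) * e3
    have hfac : (z.im - w.im) * (z.im + w.im) = 0 := by linear_combination hsq
    rcases mul_eq_zero.1 hfac with hc | hc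
    · have hzw : w.im = z.im := by linarith
      apply hne
      refine Quaternion.ext_iff.2 ⟨by rw [hJre, hIre], ?_, ?_, ?_⟩
      · exact (mul_left_cancel₀ hz (by rw [e1, hzw])).symm
      · exact (mul_left_cancel₀ hz (by rw [e2, hzw])).symm
      · exact (mul_left_cancel₀ hz (by rw [e3, hzw])).symm
    · have hzw : w.im = -z.im := by linarith
      apply hne'
      refine Quaternion.ext_iff.2 ⟨?_, ?_, ?_, ?_⟩
      · simp [hJre, hIre]
      · have := mul_left_cancel₀ hz (by rw [e1, hzw]; ring : z.im * I.imI = z.im * (-J.imI))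
        simp only [Quaternion.imI_neg]; linarith
      · have := mul_left_cancel₀ hz (by rw [e2, hzw]; ring : z.im * I.imJ = z.im * (-J.imJ))
        simp only [Quaternion.imJ_neg]; linarith
      · have := mul_left_cancel₀ hz (by rw [e3, hzw]; ring : z.im * I.imK = z.im * (-J.imK))
        simp only [Quaternion.imK_neg]; linarith

lemma norm_lt_of_normSq {q : Hq} {r : ℝ} (hr : 0 < r) (h : Quaternion.normSq q < r ^ 2) :
    ‖q‖ < r := by
  nlinarith [Quaternion.normSq_eq_norm_mul_self q, norm_nonneg q]

lemma normSq_le_norm {q : Hq} {r : ℝ} (h : r ^ 2 ≤ Quaternion.normSq q) (hr : 0 ≤ r) :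
    r ≤ ‖q‖ := by
  nlinarith [Quaternion.normSq_eq_norm_mul_self q, norm_nonneg q]

/-- Real points are not in the ball around `I`. -/
lemma real_not_mem_ball {I q : Hq} (hI : I ∈ SphereS)
    (h : q.imI = 0 ∧ q.imJ = 0 ∧ q.imK = 0) : q ∉ Metric.ball I (1 / 2) := by
  obtain ⟨hIre, hInorm⟩ := mem_sphere_iff.1 hI
  obtain ⟨h1, h2, h3⟩ := h
  intro hq
  rw [Metric.mem_ball, dist_eq_norm] at hq
  have hns : Quaternion.normSq (q - I) = (q.re - I.re)^2 + 1 := by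
    rw [Quaternion.normSq_def']
    simp only [Quaternion.re_sub, Quaternion.imI_sub, Quaternion.imJ_sub, Quaternion.imK_sub,
      h1, h2, h3]
    ring_nf
    nlinarith [hInorm]
  have : (1 : ℝ) ≤ ‖q - I‖ :=
    normSq_le_norm (by rw [hns]; nlinarith [sq_nonneg (q.re - I.re)]) one_pos.le
  linarith

/-- Key: a point of two genuinely different slices is real, hence not in the ball. -/
lemma key {I J q : Hq} (hI : I ∈ SphereS) (hJ : J ∈ SphereS)
    (hne : J ≠ I) (hne' : J ≠ -I) (h1 : q ∈ sliceC I) (h2 : q ∈ sliceC J) :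
    q ∉ Metric.ball I (1 / 2) :=
  real_not_mem_ball hI (slice_inter hI hJ hne hne' h1 h2)

/-- Every non-real quaternion lies on some slice. -/
lemma exists_slice {q : Hq} (h : ¬(q.imI = 0 ∧ q.imJ = 0 ∧ q.imK = 0)) :
    ∃ J ∈ SphereS, q ∈ sliceC J := by
  set s := q.imI ^ 2 + q.imJ ^ 2 + q.imK ^ 2 with hs
  have hspos : 0 < s := by
    rcases lt_or_eq_of_le (by positivity : (0:ℝ) ≤ s) with h' | h'
    · exact h'
    · exact absurd ⟨by nlinarith [sq_nonneg q.imI, sq_nonneg q.imJ, sq_nonneg q.imK],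
        by nlinarith [sq_nonneg q.imI, sq_nonneg q.imJ, sq_nonneg q.imK],
        by nlinarith [sq_nonneg q.imI, sq_nonneg q.imJ, sq_nonneg q.imK]⟩ h
  set n := Real.sqrt s with hn
  have hnpos : 0 < n := Real.sqrt_pos.2 hspos
  have hn2 : n ^ 2 = s := Real.sq_sqrt hspos.le
  refine ⟨⟨0, q.imI / n, q.imJ / n, q.imK / n⟩, mem_sphere_iff.2 ⟨rfl, ?_⟩, ⟨⟨q.re, n⟩, ?_⟩⟩
  · field_simp
    linarith [hn2]
  · refine Quaternion.ext_iff.2 ⟨(sliceEmb_re _ _).trans ?_, (sliceEmb_imI _ _).trans ?_,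
      (sliceEmb_imJ _ _).trans ?_, (sliceEmb_imK _ _).trans ?_⟩ <;>
      simp <;>
      field_simp

/-- There is a unit imaginary quaternion orthogonal to `I`. -/
lemma exists_orth {I : Hq} (hI : I ∈ SphereS) :
    ∃ K : Hq, K ∈ SphereS ∧ I.imI * K.imI + I.imJ * K.imJ + I.imK * K.imK = 0 := by
  obtain ⟨hIre, hInorm⟩ := mem_sphere_iff.1 hI
  by_cases h : 0 < I.imI ^ 2 + I.imJ ^ 2
  · set n := Real.sqrt (I.imI ^ 2 + I.imJ ^ 2) with hn
    have hnpos : 0 < n := Real.sqrt_pos.2 h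
    have hn2 : n ^ 2 = I.imI ^ 2 + I.imJ ^ 2 := Real.sq_sqrt h.le
    refine ⟨⟨0, -I.imJ / n, I.imI / n, 0⟩, mem_sphere_iff.2 ⟨rfl, ?_⟩, ?_⟩
    · field_simp
      linarith [hn2]
    · field_simp
      ring
  · push_neg at h
    have h1 : I.imI = 0 := by nlinarith [sq_nonneg I.imI, sq_nonneg I.imJ]
    have h2 : I.imJ = 0 := by nlinarith [sq_nonneg I.imI, sq_nonneg I.imJ]
    exact ⟨⟨0, 1, 0, 0⟩, mem_sphere_iff.2 ⟨rfl, by norm_num⟩, by simp [h1, h2]⟩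

/-- There is a slice genuinely different from `ℂ_I` meeting the ball `B(I,1/2)`. -/
lemma exists_other_slice {I : Hq} (hI : I ∈ SphereS) :
    ∃ J : Hq, J ∈ SphereS ∧ J ≠ I ∧ J ≠ -I ∧ J ∈ Metric.ball I (1 / 2) := by
  obtain ⟨hIre, hInorm⟩ := mem_sphere_iff.1 hI
  obtain ⟨K, hK, hdot⟩ := exists_orth hI
  obtain ⟨hKre, hKnorm⟩ := mem_sphere_iff.1 hK
  refine ⟨(15 / 17 : ℝ) • I + (8 / 17 : ℝ) • K, mem_sphere_iff.2 ⟨?_, ?_⟩, ?_, ?_, ?_⟩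
  · simp [Quaternion.re_add, Quaternion.re_smul, hIre, hKre]
  · simp only [Quaternion.imI_add, Quaternion.imJ_add, Quaternion.imK_add,
      Quaternion.imI_smul, Quaternion.imJ_smul, Quaternion.imK_smul, smul_eq_mul]
    nlinarith [hInorm, hKnorm, hdot]
  · intro hJ
    rw [Quaternion.ext_iff] at hJ
    obtain ⟨-, e1, e2, e3⟩ := hJ
    simp only [Quaternion.imI_add, Quaternion.imJ_add, Quaternion.imK_add,
      Quaternion.imI_smul, Quaternion.imJ_smul, Quaternion.imK_smul, smul_eq_mul] at e1 e2 e3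
    have k1 : K.imI = I.imI / 4 := by linarith
    have k2 : K.imJ = I.imJ / 4 := by linarith
    have k3 : K.imK = I.imK / 4 := by linarith
    rw [k1, k2, k3] at hKnorm
    nlinarith [hInorm, hKnorm]
  · intro hJ
    rw [Quaternion.ext_iff] at hJ
    obtain ⟨-, e1, e2, e3⟩ := hJ
    simp only [Quaternion.imI_add, Quaternion.imJ_add, Quaternion.imK_add,
      Quaternion.imI_smul, Quaternion.imJ_smul, Quaternion.imK_smul, smul_eq_mul,
      Quaternion.imI_neg, Quaternion.imJ_neg, Quaternion.imK_neg] at e1 e2 e3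
    have k1 : K.imI = -4 * I.imI := by linarith
    have k2 : K.imJ = -4 * I.imJ := by linarith
    have k3 : K.imK = -4 * I.imK := by linarith
    rw [k1, k2, k3] at hKnorm
    nlinarith [hInorm, hKnorm]
  · rw [Metric.mem_ball, dist_eq_norm]
    apply norm_lt_of_normSq (by norm_num)
    rw [Quaternion.normSq_def']
    simp only [Quaternion.re_sub, Quaternion.imI_sub, Quaternion.imJ_sub, Quaternion.imK_sub,
      Quaternion.re_add, Quaternion.imI_add, Quaternion.imJ_add, Quaternion.imK_add,
      Quaternion.re_smul, Quaternion.imI_smul, Quaternion.imJ_smul, Quaternion.imK_smul,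
      smul_eq_mul, hIre, hKre]
    nlinarith [hInorm, hKnorm, hdot]

end Aux

/-- The Euclidean ball `B(I,1/2)`, `I ∈ 𝕊`, is slice-open but not slice-connected:
it is the disjoint union of the two nonempty slice-open sets `B(I,1/2) ∩ ℂ_I` and
`⋃_{J ∈ 𝕊, J ≠ ±I} B(I,1/2) ∩ ℂ_J`. -/
theorem ball_not_sliceConnected (I : Hq) (hI : I ∈ SphereS) :
    @IsOpen Hq sliceTopology (Metric.ball I (1 / 2)) ∧
    Metric.ball I (1 / 2) =
      (Metric.ball I (1 / 2) ∩ sliceC I) ∪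
        (⋃ J ∈ SphereS \ {I, -I}, Metric.ball I (1 / 2) ∩ sliceC J) ∧
    Disjoint (Metric.ball I (1 / 2) ∩ sliceC I)
      (⋃ J ∈ SphereS \ {I, -I}, Metric.ball I (1 / 2) ∩ sliceC J) ∧
    @IsOpen Hq sliceTopology (Metric.ball I (1 / 2) ∩ sliceC I) ∧
    @IsOpen Hq sliceTopology (⋃ J ∈ SphereS \ {I, -I}, Metric.ball I (1 / 2) ∩ sliceC J) ∧
    (Metric.ball I (1 / 2) ∩ sliceC I).Nonempty ∧
    (⋃ J ∈ SphereS \ {I, -I}, Metric.ball I (1 / 2) ∩ sliceC J).Nonempty ∧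
    ¬ @IsPreconnected Hq sliceTopology (Metric.ball I (1 / 2)) := by
  have hBopen : @IsOpen Hq sliceTopology (Metric.ball I (1 / 2)) :=
    isOpen_slice_iff.2 fun J _ => (continuous_sliceEmb J).isOpen_preimage _ Metric.isOpen_ball
  have hcover : Metric.ball I (1 / 2) =
      (Metric.ball I (1 / 2) ∩ sliceC I) ∪
        (⋃ J ∈ SphereS \ {I, -I}, Metric.ball I (1 / 2) ∩ sliceC J) := by
    apply Set.Subset.antisymm
    · intro q hq
      by_cases hreal : q.imI = 0 ∧ q.imJ = 0 ∧ q.imK = 0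
      · exact absurd hq (real_not_mem_ball hI hreal)
      · obtain ⟨J, hJ, hqJ⟩ := exists_slice hreal
        by_cases hJI : J = I
        · exact Or.inl ⟨hq, hJI ▸ hqJ⟩
        by_cases hJI' : J = -I
        · refine Or.inl ⟨hq, ?_⟩
          rw [hJI', sliceC_neg] at hqJ; exact hqJ
        · refine Or.inr (Set.mem_biUnion ⟨hJ, ?_⟩ ⟨hq, hqJ⟩)
          simp [hJI, hJI']
    · rintro q (⟨hq, -⟩ | hq)
      · exact hq
      · simp only [Set.mem_iUnion, exists_prop] at hq
        obtain ⟨J, -, hq, -⟩ := hq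
        exact hq
  have hdisj : Disjoint (Metric.ball I (1 / 2) ∩ sliceC I)
      (⋃ J ∈ SphereS \ {I, -I}, Metric.ball I (1 / 2) ∩ sliceC J) := by
    rw [Set.disjoint_left]
    intro q hqU hqV
    simp only [Set.mem_iUnion, exists_prop] at hqV
    obtain ⟨J, ⟨hJS, hJn⟩, hball, hqJ⟩ := hqV
    have h1 : J ≠ I := fun h => hJn (by simp [h])
    have h2 : J ≠ -I := fun h => hJn (by simp [h])
    exact key hI hJS h1 h2 hqU.2 hqJ hqU.1
  have hUopen : @IsOpen Hq sliceTopology (Metric.ball I (1 / 2) ∩ sliceC I) := by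
    rw [isOpen_slice_iff]
    intro K hK
    by_cases hKI : K = I ∨ K = -I
    · have hrange : ∀ z, sliceEmb K z ∈ sliceC I := by
        rcases hKI with rfl | rfl
        · exact fun z => ⟨z, rfl⟩
        · intro z
          rw [← sliceC_neg]
          exact ⟨z, rfl⟩
      have heq : sliceEmb K ⁻¹' (Metric.ball I (1 / 2) ∩ sliceC I) =
          sliceEmb K ⁻¹' (Metric.ball I (1 / 2)) := by
        ext z
        exact ⟨fun h => h.1, fun h => ⟨h, hrange z⟩⟩
      rw [heq]
      exact (continuous_sliceEmb K).isOpen_preimage _ Metric.isOpen_ball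
    · push_neg at hKI
      have heq : sliceEmb K ⁻¹' (Metric.ball I (1 / 2) ∩ sliceC I) = ∅ := by
        ext z
        simp only [Set.mem_preimage, Set.mem_inter_iff, Set.mem_empty_iff_false, iff_false,
          not_and]
        intro hball hmem
        exact key hI hK hKI.1 hKI.2 hmem ⟨z, rfl⟩ hball
      rw [heq]
      exact isOpen_empty
  have hVeq : (⋃ J ∈ SphereS \ {I, -I}, Metric.ball I (1 / 2) ∩ sliceC J) =
      Metric.ball I (1 / 2) ∩ (sliceC I)ᶜ := by
    apply Set.Subset.antisymm
    · intro q hq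
      simp only [Set.mem_iUnion, exists_prop] at hq
      obtain ⟨J, ⟨hJS, hJn⟩, hball, hqJ⟩ := hq
      have h1 : J ≠ I := fun h => hJn (by simp [h])
      have h2 : J ≠ -I := fun h => hJn (by simp [h])
      exact ⟨hball, fun hqI => key hI hJS h1 h2 hqI hqJ hball⟩
    · rintro q ⟨hball, hqI⟩
      have hreal : ¬(q.imI = 0 ∧ q.imJ = 0 ∧ q.imK = 0) :=
        fun h => real_not_mem_ball hI h hball
      obtain ⟨J, hJ, hqJ⟩ := exists_slice hreal
      have h1 : J ≠ I := fun h => hqI (h ▸ hqJ)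
      have h2 : J ≠ -I := fun h => hqI (by rw [h, sliceC_neg] at hqJ; exact hqJ)
      refine Set.mem_biUnion ⟨hJ, ?_⟩ ⟨hball, hqJ⟩
      simp [h1, h2]
  have hVopen : @IsOpen Hq sliceTopology
      (⋃ J ∈ SphereS \ {I, -I}, Metric.ball I (1 / 2) ∩ sliceC J) := by
    rw [hVeq, isOpen_slice_iff]
    intro K hK
    by_cases hKI : K = I ∨ K = -I
    · have hrange : ∀ z, sliceEmb K z ∈ sliceC I := by
        rcases hKI with rfl | rfl
        · exact fun z => ⟨z, rfl⟩
        · intro z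
          rw [← sliceC_neg]
          exact ⟨z, rfl⟩
      have heq : sliceEmb K ⁻¹' (Metric.ball I (1 / 2) ∩ (sliceC I)ᶜ) = ∅ := by
        ext z
        simp only [Set.mem_preimage, Set.mem_inter_iff, Set.mem_compl_iff,
          Set.mem_empty_iff_false, iff_false, not_and]
        exact fun _ h => h (hrange z)
      rw [heq]
      exact isOpen_empty
    · push_neg at hKI
      have heq : sliceEmb K ⁻¹' (Metric.ball I (1 / 2) ∩ (sliceC I)ᶜ) =
          sliceEmb K ⁻¹' (Metric.ball I (1 / 2)) := by
        ext z
        refine ⟨fun h => h.1, fun h => ⟨h, fun hqI => key hI hK hKI.1 hKI.2 hqI ⟨z, rfl⟩ h⟩⟩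
      rw [heq]
      exact (continuous_sliceEmb K).isOpen_preimage _ Metric.isOpen_ball
  have hImem : I ∈ Metric.ball I (1 / 2) := Metric.mem_ball_self (by norm_num)
  have hUne : (Metric.ball I (1 / 2) ∩ sliceC I).Nonempty :=
    ⟨I, hImem, self_mem_sliceC I⟩
  obtain ⟨J0, hJ0S, hJ0I, hJ0I', hJ0ball⟩ := exists_other_slice hI
  have hJ0V : J0 ∈ ⋃ J ∈ SphereS \ {I, -I}, Metric.ball I (1 / 2) ∩ sliceC J := by
    refine Set.mem_biUnion ⟨hJ0S, ?_⟩ ⟨hJ0ball, self_mem_sliceC J0⟩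
    simp [hJ0I, hJ0I']
  have hVne : (⋃ J ∈ SphereS \ {I, -I}, Metric.ball I (1 / 2) ∩ sliceC J).Nonempty :=
    ⟨J0, hJ0V⟩
  refine ⟨hBopen, hcover, hdisj, hUopen, hVopen, hUne, hVne, ?_⟩
  intro hpc
  obtain ⟨q, -, hqU, hqV⟩ :=
    hpc (Metric.ball I (1 / 2) ∩ sliceC I)
      (⋃ J ∈ SphereS \ {I, -I}, Metric.ball I (1 / 2) ∩ sliceC J)
      hUopen hVopen hcover.le
      ⟨I, hImem, hImem, self_mem_sliceC I⟩
      ⟨J0, hJ0ball, hJ0V⟩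
  exact Set.disjoint_left.1 hdisj hqU hqV
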